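/- Let K ⊆ ℝ^m be a nonempty, closed, convex set and let (S, 𝒮, μ) be a finite measure space. Let G ∈ L²(μ; ℝ^m) and let u ∈ L²(μ; ℝ^m) satisfy u(s) ∈ K for μ-a.e. s ∈ S. Then the following two statements are equivalent: (1) for μ-a.e. s ∈ S, ⟨G(s), v − u(s)⟩ ≥ 0 for all v ∈ K; (2) for every v' ∈ L²(μ; ℝ^m) with v'(s) ∈ K for μ-a.e. s ∈ S, ∫_S ⟨G(s), v'(s) − u(s)⟩ dμ(s) ≥ 0. -/

import Mathlib

open MeasureTheory
open scoped RealInnerProductSpace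

private lemma integrable_inner_of_memL2 {m : ℕ} {S : Type*} [MeasurableSpace S]
    {μ : Measure S} {f g : S → EuclideanSpace ℝ (Fin m)}
    (hf : MemLp f 2 μ) (hg : MemLp g 2 μ) :
    Integrable (fun s => ⟪f s, g s⟫) μ := by
  have h := MeasureTheory.L2.integrable_inner (𝕜 := ℝ) (hf.toLp f) (hg.toLp g)
  refine h.congr ?_
  filter_upwards [hf.coeFn_toLp, hg.coeFn_toLp] with s h1 h2
  rw [h1, h2]

/-- Equivalence of the pointwise (a.e.) variational inequality and its integrated form:
for `G, u ∈ L²(μ; ℝ^m)` with `u(s) ∈ K` a.e. (`K` nonempty closed convex, `μ` finite),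
`⟨G(s), v − u(s)⟩ ≥ 0` for all `v ∈ K`, a.e. `s`, iff
`∫ ⟨G(s), v'(s) − u(s)⟩ dμ ≥ 0` for every `v' ∈ L²` with `v'(s) ∈ K` a.e. -/
theorem stmt_4 {m : ℕ} (K : Set (EuclideanSpace ℝ (Fin m)))
    (hKne : K.Nonempty) (hKcl : IsClosed K) (hKcv : Convex ℝ K)
    {S : Type*} [MeasurableSpace S] (μ : Measure S) [IsFiniteMeasure μ]
    (G u : S → EuclideanSpace ℝ (Fin m))
    (hG : MemLp G 2 μ) (hu : MemLp u 2 μ) (huK : ∀ᵐ s ∂μ, u s ∈ K) :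
    (∀ᵐ s ∂μ, ∀ v ∈ K, 0 ≤ ⟪G s, v - u s⟫) ↔
      (∀ v' : S → EuclideanSpace ℝ (Fin m), MemLp v' 2 μ → (∀ᵐ s ∂μ, v' s ∈ K) →
        0 ≤ ∫ s, ⟪G s, v' s - u s⟫ ∂μ) := by
  constructor
  · intro h1 v' hv' hv'K
    refine integral_nonneg_of_ae ?_
    filter_upwards [h1, hv'K] with s hs hsK
    exact hs _ hsK
  · intro h2
    -- measurable representatives
    set G' := hG.1.mk G with hG'def
    set u' := hu.1.mk u with hu'def
    have hGm : StronglyMeasurable G' := hG.1.stronglyMeasurable_mk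
    have hum : StronglyMeasurable u' := hu.1.stronglyMeasurable_mk
    have hGae : G =ᵐ[μ] G' := hG.1.ae_eq_mk
    have huae : u =ᵐ[μ] u' := hu.1.ae_eq_mk
    have hu'K : ∀ᵐ s ∂μ, u' s ∈ K := by
      filter_upwards [huK, huae] with s h1 h2 using h2 ▸ h1
    have hu' : MemLp u' 2 μ := hu.ae_eq huae
    -- countable dense subset of K
    obtain ⟨D, hDK, hDc, hKD⟩ :=
      (TopologicalSpace.IsSeparable.of_separableSpace K).exists_countable_dense_subset
    have key : ∀ v ∈ D, ∀ᵐ s ∂μ, 0 ≤ ⟪G s, v - u s⟫ := by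
      intro v hvD
      have hvK : v ∈ K := hDK hvD
      set f : S → ℝ := fun s => ⟪G' s, v - u' s⟫ with hfdef
      have hfm : StronglyMeasurable f :=
        hGm.inner (stronglyMeasurable_const.sub hum)
      have hA : MeasurableSet {s | f s < 0} :=
        measurableSet_lt hfm.measurable measurable_const
      set A := {s | f s < 0} with hAdef
      set v' : S → EuclideanSpace ℝ (Fin m) := fun s => if s ∈ A then v else u' s
        with hv'def
      have hv'eq : v' = fun s =>
          A.indicator (fun _ => v) s + Aᶜ.indicator u' s := by
        funext s
        by_cases hs : s ∈ A <;> simp [hv'def, Set.indicator, hs]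
      have hv'mem : MemLp v' 2 μ := by
        rw [hv'eq]
        exact ((memLp_const v).indicator hA).add (hu'.indicator hA.compl)
      have hv'K : ∀ᵐ s ∂μ, v' s ∈ K := by
        filter_upwards [hu'K] with s hsu
        by_cases hs : s ∈ A <;> simp [hv'def, hs, hvK, hsu]
      have hint := h2 v' hv'mem hv'K
      set g : S → ℝ := fun s => if s ∈ A then f s else 0 with hgdef
      have hgle : ∀ s, g s ≤ 0 := by
        intro s
        by_cases hs : s ∈ A <;> simp [hgdef, hs]
        exact le_of_lt hs
      have hgeq : (fun s => ⟪G s, v' s - u s⟫) =ᵐ[μ] g := by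
        filter_upwards [hGae, huae] with s h1 h2
        by_cases hs : s ∈ A <;>
          simp [hgdef, hv'def, hfdef, hs, h1, h2]
      have hgint : Integrable g μ := by
        refine (integrable_inner_of_memL2 hG (hv'mem.sub hu)).congr hgeq
      have hintg : 0 ≤ ∫ s, g s ∂μ := by
        rwa [integral_congr_ae hgeq] at hint
      have hintg' : ∫ s, g s ∂μ ≤ 0 :=
        integral_nonpos (fun s => hgle s)
      have hgint' : Integrable (fun s => -g s) μ := hgint.neg
      have hg0 : (fun s => -g s) =ᵐ[μ] 0 := by
        rw [← integral_eq_zero_iff_of_nonneg_ae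
          (Filter.Eventually.of_forall fun s => by simpa using hgle s) hgint']
        simp only [integral_neg, neg_eq_zero]
        exact le_antisymm hintg' hintg
      filter_upwards [hg0, hGae, huae] with s hs h1 h2
      rw [h1, h2]
      by_contra hneg
      push_neg at hneg
      have hsA : s ∈ A := hneg
      have : g s = 0 := by simpa using hs
      rw [hgdef] at this
      simp only [hsA, if_pos] at this
      exact absurd this (ne_of_lt hsA)
    have hall : ∀ᵐ s ∂μ, ∀ v ∈ D, 0 ≤ ⟪G s, v - u s⟫ :=
      (ae_ball_iff hDc).mpr key
    filter_upwards [hall] with s hs v hvK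
    have hC : IsClosed {w : EuclideanSpace ℝ (Fin m) | 0 ≤ ⟪G s, w - u s⟫} := by
      have hcont : Continuous fun w : EuclideanSpace ℝ (Fin m) => ⟪G s, w - u s⟫ :=
        continuous_const.inner (continuous_id.sub continuous_const)
      exact isClosed_le continuous_const hcont
    have hDC : D ⊆ {w : EuclideanSpace ℝ (Fin m) | 0 ≤ ⟪G s, w - u s⟫} := hs
    exact (hC.closure_subset_iff.mpr hDC) (hKD hvK)
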